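/- Let $F:\mathbb{R}^d\to\mathbb{R}$ be $\gamma$-quasar convex with minimizer $x^*$ and weakly $L$-smooth, with $F^* = F(x^*)$. Let $\eta, b_0 > 0$ and define iterates $x_{t+1} = x_t - \frac{\eta}{b_t}\nabla F(x_t)$ where $b_t = \sqrt{b_0^2 + \sum_{i=1}^t \|\nabla F(x_i)\|^2}$. Then $\sum_{t=1}^T \frac{F(x_t)-F^*}{b_t} \le \frac{\|x_1 - x^*\|^2}{\gamma\eta} + \frac{2\eta}{\gamma}\max\{\log\frac{2\eta L}{\gamma b_0}, 0\}$. -/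

import Mathlib

open RealInnerProductSpace Finset

/-- Pure real-arithmetic core of one AdaGrad-norm step. -/
lemma aux_step_stmt4 (γ η L B c bt Δ G A A' P ms mt : ℝ)
    (hγ0 : 0 < γ) (hη : 0 < η) (hL : 0 < L) (hBpos : 0 < B)
    (hB : B = 2 * η * L / γ)
    (hc : 0 < c) (hbt : 0 < bt) (hΔ0 : 0 ≤ Δ) (hG0 : 0 ≤ G)
    (hrec : c ^ 2 = bt ^ 2 + G)
    (hGle : G ≤ 2 * L * Δ)
    (hexp : A' = A - 2 * (η / c) * P + (η / c) ^ 2 * G)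
    (hip : γ * Δ ≤ P)
    (hms : ms = min c B) (hmt : mt = min bt B) (hbtc : bt ≤ c) :
    γ / 2 * (Δ / c) + A' / (2 * η)
      ≤ A / (2 * η) + η / 2 * (Real.log (ms ^ 2) - Real.log (mt ^ 2)) := by
  have hc' : c ≠ 0 := ne_of_gt hc
  have hdesc : 2 * η * γ * (Δ / c) ≤ A - A' + (η / c) ^ 2 * G := by
    have h2 : (2 * η / c) * (γ * Δ) ≤ (2 * η / c) * P :=
      mul_le_mul_of_nonneg_left hip (by positivity)
    have e1 : (2 * η / c) * (γ * Δ) = 2 * η * γ * (Δ / c) := by ring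
    have e2 : 2 * (η / c) * P = (2 * η / c) * P := by ring
    linarith
  have claim : (η / c) ^ 2 * G
      ≤ γ * η * (Δ / c) + η ^ 2 * (Real.log (ms ^ 2) - Real.log (mt ^ 2)) := by
    by_cases hcase : B ≤ c
    · have h5 : 2 * η * L ≤ γ * c := by
        rw [hB] at hcase
        rw [div_le_iff₀ hγ0] at hcase
        linarith
      have h6 : η ^ 2 * G ≤ γ * η * Δ * c := by
        nlinarith [mul_le_mul_of_nonneg_left hGle (sq_nonneg η),
          mul_le_mul_of_nonneg_right h5 (mul_nonneg hη.le hΔ0)]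
      have h7 : η ^ 2 * G / c ^ 2 ≤ γ * η * Δ * c / c ^ 2 := by
        apply div_le_div_of_nonneg_right h6 (by positivity)
      have e7 : γ * η * Δ * c / c ^ 2 = γ * η * (Δ / c) := by
        field_simp
      have e8 : (η / c) ^ 2 * G = η ^ 2 * G / c ^ 2 := by ring
      have hmtpos : 0 < mt := by rw [hmt]; exact lt_min hbt hBpos
      have hmsle : mt ≤ ms := by rw [hms, hmt]; exact min_le_min hbtc le_rfl
      have hlog : 0 ≤ Real.log (ms ^ 2) - Real.log (mt ^ 2) := by
        have := Real.log_le_log (pow_pos hmtpos 2)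
          (pow_le_pow_left₀ hmtpos.le hmsle 2)
        linarith
      have h15 : 0 ≤ η ^ 2 * (Real.log (ms ^ 2) - Real.log (mt ^ 2)) :=
        mul_nonneg (sq_nonneg η) hlog
      linarith
    · push_neg at hcase
      have ems : ms = c := by rw [hms]; exact min_eq_left hcase.le
      have emt : mt = bt := by rw [hmt]; exact min_eq_left (hbtc.trans hcase.le)
      have h8 : Real.log (bt ^ 2 / c ^ 2) ≤ bt ^ 2 / c ^ 2 - 1 :=
        Real.log_le_sub_one_of_pos (by positivity)
      have h9 : Real.log (bt ^ 2 / c ^ 2) = Real.log (bt ^ 2) - Real.log (c ^ 2) :=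
        Real.log_div (by positivity) (by positivity)
      have h10 : G / c ^ 2 = 1 - bt ^ 2 / c ^ 2 := by
        field_simp
        linarith
      have h11 : G / c ^ 2 ≤ Real.log (c ^ 2) - Real.log (bt ^ 2) := by linarith
      have h12 : η ^ 2 * (G / c ^ 2)
          ≤ η ^ 2 * (Real.log (ms ^ 2) - Real.log (mt ^ 2)) := by
        rw [ems, emt]
        exact mul_le_mul_of_nonneg_left h11 (by positivity)
      have h13 : 0 ≤ γ * η * (Δ / c) :=
        mul_nonneg (by positivity) (div_nonneg hΔ0 hc.le)
      have e8 : (η / c) ^ 2 * G = η ^ 2 * (G / c ^ 2) := by ring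
      linarith
  have hkey : η * γ * (Δ / c)
      ≤ (A - A') + η ^ 2 * (Real.log (ms ^ 2) - Real.log (mt ^ 2)) := by
    have e : 2 * η * γ * (Δ / c) = 2 * (γ * η * (Δ / c)) := by ring
    have e' : η * γ * (Δ / c) = γ * η * (Δ / c) := by ring
    linarith
  have h2η : (0:ℝ) < 2 * η := by positivity
  have h := div_le_div_of_nonneg_right hkey h2η.le
  have e1 : (η * γ * (Δ / c)) / (2 * η) = γ / 2 * (Δ / c) := by
    field_simp
  have e2 : ((A - A') + η ^ 2 * (Real.log (ms ^ 2) - Real.log (mt ^ 2))) / (2 * η)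
      = (A - A') / (2 * η)
        + η / 2 * (Real.log (ms ^ 2) - Real.log (mt ^ 2)) := by
    field_simp
  have e3 : A / (2 * η) - A' / (2 * η) = (A - A') / (2 * η) := by ring
  linarith

theorem stmt_4 {d : ℕ} (F : EuclideanSpace ℝ (Fin d) → ℝ)
    (xstar : EuclideanSpace ℝ (Fin d)) (γ L η b₀ : ℝ) (T : ℕ)
    (hγ : γ ∈ Set.Ioc (0 : ℝ) 1) (hL : 0 < L) (hη : 0 < η) (hb₀ : 0 < b₀)
    (hdiff : Differentiable ℝ F)
    (hmin : ∀ y, F xstar ≤ F y)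
    (hquasar : ∀ y, F xstar ≥ F y + (1 / γ) * ⟪gradient F y, xstar - y⟫)
    (hweak : ∀ y, F y - F xstar ≥ ‖gradient F y‖ ^ 2 / (2 * L))
    (x : ℕ → EuclideanSpace ℝ (Fin d)) (b : ℕ → ℝ)
    (hb : ∀ t, b t = Real.sqrt (b₀ ^ 2 + ∑ i ∈ Finset.Icc 1 t, ‖gradient F (x i)‖ ^ 2))
    (hx : ∀ t, x (t + 1) = x t - (η / b t) • gradient F (x t)) :
    (∑ t ∈ Finset.Icc 1 T, (F (x t) - F xstar) / b t)
      ≤ ‖x 1 - xstar‖ ^ 2 / (γ * η)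
        + (2 * η / γ) * max (Real.log (2 * η * L / (γ * b₀))) 0 := by
  obtain ⟨hγ0, hγ1⟩ := hγ
  have hη' : η ≠ 0 := ne_of_gt hη
  have hγ' : γ ≠ 0 := ne_of_gt hγ0
  set B : ℝ := 2 * η * L / γ with hBdef
  have hBpos : 0 < B := by positivity
  set m : ℕ → ℝ := fun t => min (b t) B with hmdef
  have hbpos : ∀ t, 0 < b t := by
    intro t; rw [hb t]
    have h : (0:ℝ) < b₀ ^ 2 + ∑ i ∈ Finset.Icc 1 t, ‖gradient F (x i)‖ ^ 2 := by positivity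
    exact Real.sqrt_pos.mpr h
  have hbsq : ∀ t, b t ^ 2 = b₀ ^ 2 + ∑ i ∈ Finset.Icc 1 t, ‖gradient F (x i)‖ ^ 2 := by
    intro t; rw [hb t, Real.sq_sqrt]; positivity
  have hbrec : ∀ t, b (t+1) ^ 2 = b t ^ 2 + ‖gradient F (x (t+1))‖ ^ 2 := by
    intro t
    rw [hbsq, hbsq, Finset.sum_Icc_succ_top (by omega : 1 ≤ t+1)]
    ring
  have hbmono : ∀ t, b t ≤ b (t+1) := by
    intro t
    nlinarith [hbrec t, hbpos t, hbpos (t+1), sq_nonneg ‖gradient F (x (t+1))‖]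
  have hmpos : ∀ t, 0 < m t := fun t => lt_min (hbpos t) hBpos
  have hΔnn : ∀ t, 0 ≤ F (x t) - F xstar := fun t => sub_nonneg.2 (hmin _)
  -- per-step inequality
  have step : ∀ t : ℕ,
      γ/2 * ((F (x (t+1)) - F xstar) / b (t+1)) + ‖x (t+1+1) - xstar‖^2/(2*η)
      ≤ ‖x (t+1) - xstar‖^2/(2*η)
        + η/2 * (Real.log (m (t+1) ^ 2) - Real.log (m t ^ 2)) := by
    intro t
    have hexp : ‖x (t+1+1) - xstar‖^2
        = ‖x (t+1) - xstar‖^2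
          - 2 * (η / b (t+1)) * ⟪gradient F (x (t+1)), x (t+1) - xstar⟫
          + (η / b (t+1)) ^ 2 * ‖gradient F (x (t+1))‖ ^ 2 := by
      have e0 : x (t+1+1) - xstar
          = (x (t+1) - xstar) - (η / b (t+1)) • gradient F (x (t+1)) := by
        rw [hx (t+1)]; abel
      rw [e0, norm_sub_sq_real, real_inner_smul_right, norm_smul, mul_pow,
        Real.norm_eq_abs, sq_abs, real_inner_comm]
      ring
    have hip : γ * (F (x (t+1)) - F xstar)
        ≤ ⟪gradient F (x (t+1)), x (t+1) - xstar⟫ := by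
      have hq := hquasar (x (t+1))
      rw [show xstar - x (t+1) = -(x (t+1) - xstar) from (neg_sub _ _).symm,
        inner_neg_right] at hq
      have e : (1/γ) * (-⟪gradient F (x (t+1)), x (t+1) - xstar⟫)
          = -((1/γ) * ⟪gradient F (x (t+1)), x (t+1) - xstar⟫) := by ring
      have h1 : F (x (t+1)) - F xstar
          ≤ (1/γ) * ⟪gradient F (x (t+1)), x (t+1) - xstar⟫ := by linarith
      have h2 := mul_le_mul_of_nonneg_left h1 hγ0.le
      calc γ * (F (x (t+1)) - F xstar)
          ≤ γ * ((1/γ) * ⟪gradient F (x (t+1)), x (t+1) - xstar⟫) := h2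
        _ = ⟪gradient F (x (t+1)), x (t+1) - xstar⟫ := by field_simp
    have hGle : ‖gradient F (x (t+1))‖ ^ 2 ≤ 2 * L * (F (x (t+1)) - F xstar) := by
      have h2 : ‖gradient F (x (t+1))‖^2 / (2*L) ≤ F (x (t+1)) - F xstar := hweak (x (t+1))
      calc ‖gradient F (x (t+1))‖^2
          = (‖gradient F (x (t+1))‖^2 / (2*L)) * (2*L) := by field_simp
        _ ≤ (F (x (t+1)) - F xstar) * (2*L) := by
            apply mul_le_mul_of_nonneg_right h2; positivity
        _ = 2*L*(F (x (t+1)) - F xstar) := by ring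
    exact aux_step_stmt4 γ η L B (b (t+1)) (b t) (F (x (t+1)) - F xstar)
      (‖gradient F (x (t+1))‖ ^ 2) (‖x (t+1) - xstar‖^2) (‖x (t+1+1) - xstar‖^2)
      (⟪gradient F (x (t+1)), x (t+1) - xstar⟫) (m (t+1)) (m t)
      hγ0 hη hL hBpos hBdef (hbpos (t+1)) (hbpos t) (hΔnn (t+1)) (sq_nonneg _)
      (hbrec t) hGle hexp hip rfl rfl (hbmono t)
  -- main induction
  have main : ∀ N : ℕ, γ/2 * (∑ t ∈ Finset.Icc 1 N, (F (x t) - F xstar) / b t)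
      + ‖x (N+1) - xstar‖^2/(2*η)
      ≤ ‖x 1 - xstar‖^2/(2*η)
        + η/2 * (Real.log (m N ^ 2) - Real.log (m 0 ^ 2)) := by
    intro N
    induction N with
    | zero =>
      rw [show (Finset.Icc 1 0 : Finset ℕ) = ∅ from Finset.Icc_eq_empty (by omega)]
      rw [Finset.sum_empty]
      norm_num
    | succ n ih =>
      rw [Finset.sum_Icc_succ_top (by omega : 1 ≤ n+1)]
      have := step n
      linarith
  -- finish
  have hfin := main T
  have hA'nn : 0 ≤ ‖x (T+1) - xstar‖^2/(2*η) := by positivity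
  set M : ℝ := max (Real.log (2 * η * L / (γ * b₀))) 0 with hM
  have hMnn : (0:ℝ) ≤ M := le_max_right _ _
  have hb0 : b 0 = b₀ := by
    rw [hb 0]
    rw [show (Finset.Icc 1 0 : Finset ℕ) = ∅ from Finset.Icc_eq_empty (by omega)]
    rw [Finset.sum_empty, add_zero, Real.sqrt_sq hb₀.le]
  have hlogT : Real.log (m T ^ 2) ≤ Real.log (B ^ 2) :=
    Real.log_le_log (pow_pos (hmpos T) 2)
      (pow_le_pow_left₀ (hmpos T).le (min_le_right _ _) 2)
  have l3 : Real.log (B^2) - Real.log (m 0 ^2) ≤ 2 * M := by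
    have elog : ∀ y : ℝ, Real.log (y^2) = 2 * Real.log y := by
      intro y; rw [Real.log_pow]; push_cast; ring
    rw [elog B, elog (m 0)]
    have hm0 : m 0 = min b₀ B := by rw [hmdef]; simp [hb0]
    rcases le_total b₀ B with h | h
    · have hmm : m 0 = b₀ := by rw [hm0]; exact min_eq_left h
      rw [hmm]
      have e2 : Real.log B - Real.log b₀ = Real.log (B/b₀) :=
        (Real.log_div (ne_of_gt hBpos) (ne_of_gt hb₀)).symm
      have e3 : B/b₀ = 2*η*L/(γ*b₀) := by rw [hBdef, div_div]
      rw [e3] at e2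
      have h4 : Real.log (2*η*L/(γ*b₀)) ≤ M := le_max_left _ _
      linarith
    · have hmm : m 0 = B := by rw [hm0]; exact min_eq_right h
      rw [hmm]; linarith
  have hfin2 : γ/2 * (∑ t ∈ Finset.Icc 1 T, (F (x t) - F xstar) / b t)
      ≤ ‖x 1 - xstar‖^2/(2*η) + η * M := by
    have h14 : η/2 * (Real.log (m T ^ 2) - Real.log (m 0 ^ 2)) ≤ η/2 * (2*M) := by
      apply mul_le_mul_of_nonneg_left _ (by positivity : (0:ℝ) ≤ η/2)
      linarith
    have e : η/2*(2*M) = η * M := by ring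
    linarith
  have e : ‖x 1 - xstar‖^2/(γ*η) + (2*η/γ)*M
      = (‖x 1 - xstar‖^2/η + 2*η*M)/γ := by
    field_simp
  rw [e, le_div_iff₀ hγ0]
  have e2 : ‖x 1 - xstar‖^2/η = 2*(‖x 1 - xstar‖^2/(2*η)) := by
    field_simp
  linarith
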